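/- Let A be a unital algebra with an action α of a finite abelian group Λ by algebra automorphisms such that for every character φ ∈ Hom(Λ, 𝕋), the isotypic component A_φ = {a ∈ A : ∀λ, α(λ)·a = φ(λ)·a} contains an invertible element. Then the action of Λ on the spectrum Γ_A of A given by χ·λ := χ ∘ α(λ) is free. -/

import Mathlib

/-- Let `Λ` be a finite abelian group acting on a unital complex
algebra `A` by algebra automorphisms via `α : Λ → Aut(A)`, such that for every
character `φ : Λ → 𝕋` the isotypic component
`A_φ = {a : ∀ λ, α(λ)·a = φ(λ)·a}` contains an invertible element.  Then the action
of `Λ` on the spectrum of `A` given by `χ·λ := χ ∘ α(λ)` is free. -/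
theorem stmt6 (Λ : Type*) [CommGroup Λ] [Fintype Λ]
    (A : Type*) [Ring A] [Algebra ℂ A] (α : Λ →* (A ≃ₐ[ℂ] A))
    (hunits : ∀ φ : Λ →* Circle, ∃ a : Aˣ,
      ∀ lam : Λ, α lam (a : A) = ((φ lam : ℂ)) • (a : A)) :
    ∀ (χ : A →ₐ[ℂ] ℂ) (lam : Λ), (∀ x : A, χ (α lam x) = χ x) → lam = 1 := by
  intro χ lam hfix
  by_contra hlam
  -- get a separating character Λ →* ℂˣ
  have : NeZero (Monoid.exponent Λ) := ⟨(Monoid.ExponentExists.exponent_pos (Monoid.ExponentExists.of_finite)).ne'⟩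
  obtain ⟨φ, hφ⟩ := CommGroup.exists_apply_ne_one_of_hasEnoughRootsOfUnity Λ ℂ hlam
  -- convert it to a character into the circle
  have hnorm : ∀ g : Λ, ‖((φ g : ℂˣ) : ℂ)‖ = 1 := by
    intro g
    refine Complex.norm_eq_one_of_pow_eq_one (n := Fintype.card Λ) ?_ Fintype.card_ne_zero
    have : φ g ^ Fintype.card Λ = 1 := by
      rw [← map_pow, pow_card_eq_one, map_one]
    exact congrArg (Units.val) (by exact_mod_cast congrArg Units.val this)
  let ψ : Λ →* Circle :=
    { toFun := fun g => ⟨((φ g : ℂˣ) : ℂ), by simpa [Circle, Submonoid.unitSphere, mem_sphere_iff_norm] using hnorm g⟩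
      map_one' := by ext; simp
      map_mul' := by intro x y; ext; simp; rfl }
  obtain ⟨a, ha⟩ := hunits ψ
  have hχa : χ (a : A) ≠ 0 := by
    intro h0
    have : χ ((a : A) * ((a⁻¹ : Aˣ) : A)) = 1 := by
      rw [Units.mul_inv]; simp
    rw [map_mul, h0, zero_mul] at this
    exact zero_ne_one this
  have := hfix (a : A)
  rw [ha lam, map_smul, smul_eq_mul] at this
  have hψ1 : ((ψ lam : ℂ)) = 1 := by
    have h : (ψ lam : ℂ) * χ (a : A) = 1 * χ (a : A) := by rw [this, one_mul]
    exact mul_right_cancel₀ hχa h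
  apply hφ
  have : ((φ lam : ℂˣ) : ℂ) = 1 := hψ1
  exact Units.ext this
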